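/- Let K be a field, let d be a positive integer, and let ε ∈ K be a primitive d-th root of unity. Let H ∈ K⟦X⟧ be a formal power series in one variable, and for each i let H(ε^i·X) denote the rescaled series whose m-th coefficient is ε^{i·m} times the m-th coefficient of H. Consider the polynomial P(t) = ∏_{i=1}^{d} (t − H(ε^i·X)) with coefficients in K⟦X⟧. Then every coefficient a_j ∈ K⟦X⟧ of P (as a polynomial in t) is a power series in X^d; i.e., the m-th coefficient of a_j vanishes whenever d does not divide m. -/

import Mathlib

/-- Let `ε` be a primitive `d`-th root of unity in a field `K` and `H ∈ K⟦X⟧`. Then every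
coefficient (as a polynomial in `t`) of `P(t) = ∏_{i=1}^d (t − H(ε^i X))` is a power series
in `X^d`: its `m`-th coefficient vanishes whenever `d ∤ m`. -/
theorem symm_product_coeffs_powerSeries_in_Xd {K : Type*} [Field K]
    (d : ℕ) (hd : 0 < d) (ε : K)
    (hεd : ε ^ d = 1) (hεprim : ∀ m : ℕ, 1 ≤ m → m < d → ε ^ m ≠ 1)
    (H : PowerSeries K) :
    ∀ j m : ℕ, ¬ d ∣ m →
      PowerSeries.coeff m
        ((∏ i ∈ Finset.range d,
          (Polynomial.X - Polynomial.C (PowerSeries.rescale (ε ^ (i + 1)) H))).coeff j)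
        = 0 := by
  intro j m hm
  set g : ℕ → Polynomial (PowerSeries K) :=
    fun i => Polynomial.X - Polynomial.C (PowerSeries.rescale (ε ^ (i + 1)) H) with hg
  set P : Polynomial (PowerSeries K) := ∏ i ∈ Finset.range d, g i with hP
  have hpow : ∀ n : ℕ, ε ^ (n % d) = ε ^ n := by
    intro n
    conv_rhs => rw [← Nat.mod_add_div n d, pow_add, pow_mul, hεd, one_pow, mul_one]
  -- mapping each factor by `rescale ε` shifts the index by one
  have hshift : ∀ i : ℕ, (g i).map (PowerSeries.rescale ε) = g (i + 1) := by
    intro i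
    simp only [hg, Polynomial.map_sub, Polynomial.map_X, Polynomial.map_C,
      PowerSeries.rescale_rescale, ← pow_succ]
  have hgd : g d = g 0 := by
    simp only [hg]
    congr 2
    rw [pow_succ, hεd, one_mul, zero_add, pow_one]
  have hg0 : g 0 ≠ 0 := Polynomial.X_sub_C_ne_zero _
  have hmap : P.map (PowerSeries.rescale ε) = P := by
    rw [hP, Polynomial.map_prod]
    simp only [hshift]
    have key : (∏ i ∈ Finset.range d, g (i + 1)) * g 0
        = (∏ i ∈ Finset.range d, g i) * g 0 := by
      rw [← Finset.prod_range_succ', Finset.prod_range_succ, hgd]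
    exact mul_right_cancel₀ hg0 key
  -- extract the coefficient equation
  have hcoeff : PowerSeries.rescale ε (P.coeff j) = P.coeff j := by
    conv_rhs => rw [← hmap]
    rw [Polynomial.coeff_map]
  have h1 : ε ^ m * PowerSeries.coeff m (P.coeff j)
      = PowerSeries.coeff m (P.coeff j) := by
    conv_rhs => rw [← hcoeff]
    rw [PowerSeries.coeff_rescale]
  have hne : ε ^ m ≠ 1 := by
    rw [← hpow m]
    exact hεprim _ (Nat.one_le_iff_ne_zero.2 fun h => hm (Nat.dvd_of_mod_eq_zero h))
      (Nat.mod_lt _ hd)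
  by_contra hc
  exact hne (mul_right_cancel₀ hc (h1.trans (one_mul _).symm))
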